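/- For every first-order sentence φ of quantifier depth at most 2 in the language of graphs, there exists a boolean combination ψ of the three properties 'G has at most one vertex', 'G is a complete graph', and 'G has a dominating vertex (a vertex adjacent to all other vertices)' such that for every connected simple graph G, G satisfies φ if and only if G satisfies ψ. -/

import Mathlib

/-! ### First-order logic on graphs -/

/-- First-order formulas in the language of graphs (equality and one binary
adjacency relation), with free variables among `Fin n`. -/
inductive GraphFormula : ℕ → Type where
  | eq : ∀ {n : ℕ}, Fin n → Fin n → GraphFormula n
  | adj : ∀ {n : ℕ}, Fin n → Fin n → GraphFormula n
  | not : ∀ {n : ℕ}, GraphFormula n → GraphFormula n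
  | and : ∀ {n : ℕ}, GraphFormula n → GraphFormula n → GraphFormula n
  | or : ∀ {n : ℕ}, GraphFormula n → GraphFormula n → GraphFormula n
  | all : ∀ {n : ℕ}, GraphFormula (n + 1) → GraphFormula n
  | ex : ∀ {n : ℕ}, GraphFormula (n + 1) → GraphFormula n

namespace GraphFormula

/-- Quantifier depth of a formula: the maximum number of nested quantifiers. -/
def qdepth : ∀ {n : ℕ}, GraphFormula n → ℕ
  | _, .eq _ _ => 0
  | _, .adj _ _ => 0
  | _, .not f => qdepth f
  | _, .and f g => max (qdepth f) (qdepth g)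
  | _, .or f g => max (qdepth f) (qdepth g)
  | _, .all f => qdepth f + 1
  | _, .ex f => qdepth f + 1

/-- Satisfaction of a formula in a simple graph, under an assignment of the
free variables. -/
def Sat {V : Type*} (G : SimpleGraph V) : ∀ {n : ℕ}, GraphFormula n → (Fin n → V) → Prop
  | _, .eq i j, a => a i = a j
  | _, .adj i j, a => G.Adj (a i) (a j)
  | _, .not f, a => ¬ Sat G f a
  | _, .and f g, a => Sat G f a ∧ Sat G g a
  | _, .or f g, a => Sat G f a ∨ Sat G g a
  | _, .all f, a => ∀ v, Sat G f (Fin.snoc a v)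
  | _, .ex f, a => ∃ v, Sat G f (Fin.snoc a v)

/-- Existential closure: prefix a formula with one existential quantifier for
each of its free variables. -/
def exClosure : ∀ {n : ℕ}, GraphFormula n → GraphFormula 0
  | 0, f => f
  | _ + 1, f => exClosure (GraphFormula.ex f)

end GraphFormula

/-- A graph satisfies a sentence (formula with no free variables). -/
def SatSentence {V : Type*} (G : SimpleGraph V) (φ : GraphFormula 0) : Prop :=
  GraphFormula.Sat G φ Fin.elim0

/-! ### Local certification -/

/-- A valid identifier assignment: pairwise distinct identifiers in `[1, n ^ c]`. -/
def ValidIds (c : ℕ) {n : ℕ} (ids : Fin n → ℕ) : Prop :=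
  Function.Injective ids ∧ ∀ v, 1 ≤ ids v ∧ ids v ≤ n ^ c

/-- The part of the local view of a vertex `v` consisting of the
(identifier, certificate) pairs of its neighbors. -/
def neighborsView {n : ℕ} (G : SimpleGraph (Fin n)) (ids : Fin n → ℕ)
    (cert : Fin n → List Bool) (v : Fin n) : Set (ℕ × List Bool) :=
  {p | ∃ u, G.Adj v u ∧ p = (ids u, cert u)}

/-- The part of the local view of a vertex `v`, in the presence of inputs
(labels), consisting of the (identifier, label, certificate) triples of its
neighbors. -/
def labeledNeighborsView {n : ℕ} {L : Type*} (G : SimpleGraph (Fin n)) (ids : Fin n → ℕ)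
    (lab : Fin n → L) (cert : Fin n → List Bool) (v : Fin n) :
    Set (ℕ × L × List Bool) :=
  {p | ∃ u, G.Adj v u ∧ p = (ids u, lab u, cert u)}

/-! ### Rooted trees, elimination trees and treedepth -/

/-- A rooted tree on the vertex set `V`, given by its root and parent
function: every vertex reaches the root by iterating the parent map. -/
structure ElimTree (V : Type*) where
  root : V
  parent : V → V
  parent_root : parent root = root
  reaches_root : ∀ v, ∃ j : ℕ, parent^[j] v = root

namespace ElimTree

variable {V : Type*}

/-- The depth of a vertex in a rooted tree (the root has depth 0). -/
noncomputable def depth (T : ElimTree V) (v : V) : ℕ :=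
  sInf {j : ℕ | T.parent^[j] v = T.root}

/-- `u` is an ancestor of `v` (possibly `u = v`). -/
def IsAncestor (T : ElimTree V) (u v : V) : Prop :=
  ∃ j : ℕ, T.parent^[j] v = u

/-- The set of vertices of `S` in the subtree rooted at `v`. -/
def subtree (T : ElimTree V) (S : Set V) (v : V) : Set V :=
  {x ∈ S | T.IsAncestor v x}

end ElimTree

/-- `T` is a `t`-model (elimination tree of depth at most `t`) of `G`:
every vertex has depth at most `t` and every edge of `G` joins a vertex to
one of its ancestors. -/
def IsModelOfDepth {V : Type*} (T : ElimTree V) (G : SimpleGraph V) (t : ℕ) : Prop :=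
  (∀ v, T.depth v ≤ t) ∧ ∀ u v, G.Adj u v → T.IsAncestor u v ∨ T.IsAncestor v u

/-- The graph `G` has treedepth at most `t`. -/
def TreedepthLE {V : Type*} (G : SimpleGraph V) (t : ℕ) : Prop :=
  ∃ T : ElimTree V, IsModelOfDepth T G t

/-- A model `T` of `G` is coherent if for every non-root vertex `w` (i.e.
every child `w` of a vertex of `T`), some vertex of the subtree rooted at `w`
is adjacent in `G` to the parent of `w`. -/
def Coherent {V : Type*} (T : ElimTree V) (G : SimpleGraph V) : Prop :=
  ∀ w, w ≠ T.root → ∃ x, T.IsAncestor w x ∧ G.Adj x (T.parent w)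

/-! ### Types, prunings and k-reduced graphs -/

/-- The type of `v` in the induced structure on `S₁` equals the type of `w`
in the induced structure on `S₂`: there is a bijection between the subtrees
rooted at `v` and `w` preserving the tree structure, the depths, and the
ancestor vectors (adjacency in `G` to the ancestors). -/
def SameTypeIn {V : Type*} (G : SimpleGraph V) (T : ElimTree V)
    (S₁ S₂ : Set V) (v w : V) : Prop :=
  ∃ f : V → V,
    Set.BijOn f (T.subtree S₁ v) (T.subtree S₂ w) ∧
    f v = w ∧
    (∀ x ∈ T.subtree S₁ v, x ≠ v → f (T.parent x) = T.parent (f x)) ∧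
    (∀ x ∈ T.subtree S₁ v, T.depth (f x) = T.depth x ∧
      ∀ m : ℕ, G.Adj x (T.parent^[m] x) ↔ G.Adj (f x) (T.parent^[m] (f x)))

/-- Two vertices of `S` have the same type. -/
def SameType {V : Type*} (G : SimpleGraph V) (T : ElimTree V) (S : Set V) (v w : V) : Prop :=
  SameTypeIn G T S S v w

/-- A valid pruning operation on the current vertex set `S`: `u` is a vertex
whose parent has more than `k` children (in `S`) of the same type as `u`, and
the whole subtree rooted at `u` is removed, yielding `S'`. -/
def PruneStep {V : Type*} (G : SimpleGraph V) (T : ElimTree V) (k : ℕ)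
    (S : Set V) (u : V) (S' : Set V) : Prop :=
  u ∈ S ∧ u ≠ T.root ∧
  (∃ C : Set V, C ⊆ S ∧ u ∈ C ∧ C.Finite ∧ k + 1 ≤ C.ncard ∧
    (∀ w ∈ C, T.parent w = T.parent u ∧ w ≠ T.parent u) ∧
    (∀ w ∈ C, SameType G T S u w)) ∧
  S' = S \ {x | T.IsAncestor u x}

/-- A valid pruning operation performed at a vertex of the largest possible
depth among all currently possible pruning operations. -/
def MaxPruneStep {V : Type*} (G : SimpleGraph V) (T : ElimTree V) (k : ℕ)
    (S : Set V) (u : V) (S' : Set V) : Prop :=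
  PruneStep G T k S u S' ∧
    ∀ u' S'', PruneStep G T k S u' S'' → T.depth u' ≤ T.depth u

/-- A complete pruning process producing a `k`-reduced graph of `G` from the
model `T`: starting from all of `G`, valid pruning operations are applied,
always at a vertex of largest possible depth, until none applies. -/
structure PruningProcess {V : Type*} (G : SimpleGraph V) (T : ElimTree V) (k : ℕ) where
  len : ℕ
  sets : ℕ → Set V
  prunedAt : ℕ → V
  init : sets 0 = Set.univ
  step : ∀ i < len, MaxPruneStep G T k (sets i) (prunedAt i) (sets (i + 1))
  halt : ∀ u S', ¬ PruneStep G T k (sets len) u S'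

namespace PruningProcess

variable {V : Type*} {G : SimpleGraph V} {T : ElimTree V} {k : ℕ}

/-- The vertex set of the resulting `k`-reduced graph. -/
def result (P : PruningProcess G T k) : Set V := P.sets P.len

/-- The index of the step at which a vertex was deleted (the current set at
that moment still contains the vertex); for surviving vertices this is the
final index. -/
noncomputable def lastIdx (P : PruningProcess G T k) (v : V) : ℕ :=
  sInf {i : ℕ | i = P.len ∨ v ∉ P.sets (i + 1)}

/-- The vertex set that was current when `v` was deleted (for a deleted
vertex), or the final vertex set (for a surviving vertex). -/
noncomputable def currentSet (P : PruningProcess G T k) (v : V) : Set V :=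
  P.sets (P.lastIdx v)

/-- `v` and `w` have the same end type: the end type of a deleted vertex is
its type in the graph current when it was deleted, and the end type of a
surviving vertex is its type in the resulting graph. -/
def EndTypeEq (P : PruningProcess G T k) (v w : V) : Prop :=
  SameTypeIn G T (P.currentSet v) (P.currentSet w) v w

end PruningProcess

/-! ### Auxiliary: Ehrenfeucht–Fraïssé games -/

section EFaux

variable {V W : Type*}

/-- Atomic agreement of two assignments. -/
def GAtoms (G : SimpleGraph V) (H : SimpleGraph W) {n : ℕ}
    (a : Fin n → V) (b : Fin n → W) : Prop :=
  ∀ i j, (a i = a j ↔ b i = b j) ∧ (G.Adj (a i) (a j) ↔ H.Adj (b i) (b j))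

/-- `k`-round Ehrenfeucht–Fraïssé equivalence of assignments. -/
def GEF (G : SimpleGraph V) (H : SimpleGraph W) : ℕ → ∀ {n : ℕ}, (Fin n → V) → (Fin n → W) → Prop
  | 0, _, a, b => GAtoms G H a b
  | k + 1, _, a, b => GAtoms G H a b ∧
      (∀ v, ∃ w, GEF G H k (Fin.snoc a v) (Fin.snoc b w)) ∧
      (∀ w, ∃ v, GEF G H k (Fin.snoc a v) (Fin.snoc b w))

variable {G : SimpleGraph V} {H : SimpleGraph W}

lemma GEF_zero {n : ℕ} (a : Fin n → V) (b : Fin n → W) :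
    GEF G H 0 a b = GAtoms G H a b := rfl

lemma GEF_succ (k : ℕ) {n : ℕ} (a : Fin n → V) (b : Fin n → W) :
    GEF G H (k + 1) a b = (GAtoms G H a b ∧
      (∀ v, ∃ w, GEF G H k (Fin.snoc a v) (Fin.snoc b w)) ∧
      (∀ w, ∃ v, GEF G H k (Fin.snoc a v) (Fin.snoc b w))) := rfl

lemma GAtoms_symm {n : ℕ} {a : Fin n → V} {b : Fin n → W}
    (h : GAtoms G H a b) : GAtoms H G b a :=
  fun i j => ⟨(h i j).1.symm, (h i j).2.symm⟩

lemma GEF_symm : ∀ (k : ℕ) {n : ℕ} {a : Fin n → V} {b : Fin n → W},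
    GEF G H k a b → GEF H G k b a
  | 0, _, _, _, h => GAtoms_symm h
  | k + 1, _, _, _, ⟨h0, h1, h2⟩ =>
      ⟨GAtoms_symm h0,
       fun w => (h2 w).imp (fun _ hv => GEF_symm k hv),
       fun v => (h1 v).imp (fun _ hw => GEF_symm k hw)⟩

lemma GEF_atoms {k n : ℕ} {a : Fin n → V} {b : Fin n → W}
    (h : GEF G H k a b) : GAtoms G H a b := by
  cases k with
  | zero => exact h
  | succ k => exact h.1

theorem GEF_sat {n : ℕ} (φ : GraphFormula n) : ∀ {k : ℕ}, φ.qdepth ≤ k →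
    ∀ {a : Fin n → V} {b : Fin n → W}, GEF G H k a b →
    (GraphFormula.Sat G φ a ↔ GraphFormula.Sat H φ b) := by
  induction φ with
  | eq i j =>
    intro k _ a b h
    exact (GEF_atoms h i j).1
  | adj i j =>
    intro k _ a b h
    exact (GEF_atoms h i j).2
  | not f ih =>
    intro k hk a b h
    simp only [GraphFormula.Sat]
    exact not_congr (ih hk h)
  | and f g ihf ihg =>
    intro k hk a b h
    simp only [GraphFormula.qdepth, max_le_iff] at hk
    simp only [GraphFormula.Sat]
    exact and_congr (ihf hk.1 h) (ihg hk.2 h)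
  | or f g ihf ihg =>
    intro k hk a b h
    simp only [GraphFormula.qdepth, max_le_iff] at hk
    simp only [GraphFormula.Sat]
    exact or_congr (ihf hk.1 h) (ihg hk.2 h)
  | all f ih =>
    intro k hk a b h
    cases k with
    | zero => simp [GraphFormula.qdepth] at hk
    | succ k =>
      have hf : f.qdepth ≤ k := Nat.succ_le_succ_iff.mp hk
      simp only [GraphFormula.Sat]
      constructor
      · intro hs w
        obtain ⟨v, hv⟩ := h.2.2 w
        exact (ih hf hv).mp (hs v)
      · intro hs v
        obtain ⟨w, hw⟩ := h.2.1 v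
        exact (ih hf hw).mpr (hs w)
  | ex f ih =>
    intro k hk a b h
    cases k with
    | zero => simp [GraphFormula.qdepth] at hk
    | succ k =>
      have hf : f.qdepth ≤ k := Nat.succ_le_succ_iff.mp hk
      simp only [GraphFormula.Sat]
      constructor
      · intro ⟨v, hv⟩
        obtain ⟨w, hw⟩ := h.2.1 v
        exact ⟨w, (ih hf hw).mp hv⟩
      · intro ⟨w, hw⟩
        obtain ⟨v, hv⟩ := h.2.2 w
        exact ⟨v, (ih hf hv).mpr hw⟩

lemma exists_ne_of_not_subsingleton (h : ¬ ∀ y z : V, y = z) (v : V) : ∃ u : V, u ≠ v := by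
  push_neg at h
  obtain ⟨y, z, hyz⟩ := h
  by_cases hy : y = v
  · exact ⟨z, fun hz => hyz (hy.trans hz.symm)⟩
  · exact ⟨y, hy⟩

lemma exists_adj_of_connected (hc : G.Connected) {v u : V} (h : u ≠ v) :
    ∃ x, G.Adj v x := by
  obtain ⟨p⟩ := hc.preconnected v u
  cases p with
  | nil => exact absurd rfl h
  | cons hadj _ => exact ⟨_, hadj⟩

lemma choose_same_dom
    (h2 : (∀ y z : V, y ≠ z → G.Adj y z) ↔ (∀ y z : W, y ≠ z → H.Adj y z))
    (h3 : (∃ x : V, ∀ y : V, y ≠ x → G.Adj x y) ↔ (∃ x : W, ∀ y : W, y ≠ x → H.Adj x y))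
    (v : V) :
    ∃ w : W, ((∀ y : V, y ≠ v → G.Adj v y) ↔ (∀ y : W, y ≠ w → H.Adj w y)) := by
  by_cases hd : ∀ y : V, y ≠ v → G.Adj v y
  · obtain ⟨w, hw⟩ := h3.mp ⟨v, hd⟩
    exact ⟨w, iff_of_true hd hw⟩
  · have hex : ∃ w : W, ¬ ∀ y : W, y ≠ w → H.Adj w y := by
      by_contra hall
      push_neg at hall
      have hcom : ∀ y z : W, y ≠ z → H.Adj y z := fun y z hyz => hall y z hyz.symm
      have hVcom := h2.mpr hcom
      exact hd (fun y hy => hVcom v y hy.symm)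
    obtain ⟨w, hw⟩ := hex
    exact ⟨w, iff_of_false hd hw⟩

lemma pair_forth (hHc : H.Connected)
    (hsize : (∀ y z : V, y = z) ↔ (∀ y z : W, y = z))
    {v : V} {w : W}
    (hdom : (∀ y : V, y ≠ v → G.Adj v y) ↔ (∀ y : W, y ≠ w → H.Adj w y)) :
    ∀ v' : V, ∃ w' : W, (v = v' ↔ w = w') ∧ (G.Adj v v' ↔ H.Adj w w') := by
  intro v'
  by_cases hvv : v' = v
  · subst hvv
    exact ⟨w, iff_of_true rfl rfl, iff_of_false (G.loopless.irrefl v') (H.loopless.irrefl w)⟩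
  · by_cases hadj : G.Adj v v'
    · have hns : ¬ ∀ y z : W, y = z := fun h => hvv ((hsize.mpr h) v' v)
      obtain ⟨u, hu⟩ := exists_ne_of_not_subsingleton hns w
      obtain ⟨w', hw'⟩ := exists_adj_of_connected hHc hu
      refine ⟨w', iff_of_false (fun h => hvv h.symm) (fun h => H.loopless.irrefl w (h ▸ hw')), iff_of_true hadj hw'⟩
    · have hnd : ¬ ∀ y : V, y ≠ v → G.Adj v y := fun h => hadj (h v' hvv)
      have hnd' : ¬ ∀ y : W, y ≠ w → H.Adj w y := fun h => hnd (hdom.mpr h)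
      push_neg at hnd'
      obtain ⟨w', hw1, hw2⟩ := hnd'
      exact ⟨w', iff_of_false (fun h => hvv h.symm) (fun h => hw1 h.symm), iff_of_false hadj hw2⟩

lemma pair_atoms {v v' : V} {w w' : W}
    (heq : v = v' ↔ w = w') (hadj : G.Adj v v' ↔ H.Adj w w') :
    GAtoms G H (Fin.snoc (Fin.snoc Fin.elim0 v) v') (Fin.snoc (Fin.snoc Fin.elim0 w) w') := by
  set a : Fin 2 → V := Fin.snoc (Fin.snoc Fin.elim0 v) v' with ha
  set b : Fin 2 → W := Fin.snoc (Fin.snoc Fin.elim0 w) w' with hb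
  have hpair : ∀ i : Fin 2, (a i = v ∧ b i = w) ∨ (a i = v' ∧ b i = w') := by
    intro i
    fin_cases i
    · exact Or.inl ⟨rfl, rfl⟩
    · exact Or.inr ⟨rfl, rfl⟩
  intro i j
  rcases hpair i with ⟨hi1, hi2⟩ | ⟨hi1, hi2⟩ <;>
    rcases hpair j with ⟨hj1, hj2⟩ | ⟨hj1, hj2⟩ <;>
    rw [hi1, hi2, hj1, hj2]
  · exact ⟨iff_of_true rfl rfl, iff_of_false (G.loopless.irrefl v) (H.loopless.irrefl w)⟩
  · exact ⟨heq, hadj⟩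
  · exact ⟨⟨fun h => (heq.mp h.symm).symm, fun h => (heq.mpr h.symm).symm⟩,
      by rw [G.adj_comm, H.adj_comm]; exact hadj⟩
  · exact ⟨iff_of_true rfl rfl, iff_of_false (G.loopless.irrefl v') (H.loopless.irrefl w')⟩

lemma single_atoms (G : SimpleGraph V) (H : SimpleGraph W) (v : V) (w : W) :
    GAtoms G H (Fin.snoc Fin.elim0 v) (Fin.snoc Fin.elim0 w) := by
  intro i j
  have : i = j := Fin.ext (by omega)
  subst this
  exact ⟨iff_of_true rfl rfl,
    iff_of_false (G.loopless.irrefl _) (H.loopless.irrefl _)⟩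

lemma ef_one (hGc : G.Connected) (hHc : H.Connected)
    (hsize : (∀ y z : V, y = z) ↔ (∀ y z : W, y = z))
    {v : V} {w : W}
    (hdom : (∀ y : V, y ≠ v → G.Adj v y) ↔ (∀ y : W, y ≠ w → H.Adj w y)) :
    GEF G H 1 (Fin.snoc Fin.elim0 v) (Fin.snoc Fin.elim0 w) := by
  refine ⟨single_atoms G H v w, ?_, ?_⟩
  · intro v'
    obtain ⟨w', h1, h2⟩ := pair_forth hHc hsize hdom v'
    exact ⟨w', pair_atoms h1 h2⟩
  · intro w'
    obtain ⟨v', h1, h2⟩ := pair_forth hGc hsize.symm hdom.symm w'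
    exact ⟨v', pair_atoms h1.symm h2.symm⟩

lemma ef_two (hGc : G.Connected) (hHc : H.Connected)
    (h1 : (∀ y z : V, y = z) ↔ (∀ y z : W, y = z))
    (h2 : (∀ y z : V, y ≠ z → G.Adj y z) ↔ (∀ y z : W, y ≠ z → H.Adj y z))
    (h3 : (∃ x : V, ∀ y : V, y ≠ x → G.Adj x y) ↔ (∃ x : W, ∀ y : W, y ≠ x → H.Adj x y)) :
    GEF G H 2 Fin.elim0 Fin.elim0 := by
  refine ⟨fun i _ => i.elim0, ?_, ?_⟩
  · intro v
    obtain ⟨w, hdom⟩ := choose_same_dom h2 h3 v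
    exact ⟨w, ef_one hGc hHc h1 hdom⟩
  · intro w
    obtain ⟨v, hdom⟩ := choose_same_dom h2.symm h3.symm w
    exact ⟨v, GEF_symm 1 (ef_one hHc hGc h1.symm hdom)⟩

end EFaux


theorem qdepth2_classification (φ : GraphFormula 0) (hφ : GraphFormula.qdepth φ ≤ 2) :
    ∃ f : Bool → Bool → Bool → Bool,
      ∀ (V : Type) [Fintype V] (G : SimpleGraph V), G.Connected →
        ∀ b₁ b₂ b₃ : Bool,
          (b₁ = true ↔ ∀ y z : V, y = z) →
          (b₂ = true ↔ ∀ y z : V, y ≠ z → G.Adj y z) →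
          (b₃ = true ↔ ∃ x : V, ∀ y : V, y ≠ x → G.Adj x y) →
          (SatSentence G φ ↔ f b₁ b₂ b₃ = true) := by
  classical
  set P : Bool → Bool → Bool → Prop := fun b₁ b₂ b₃ =>
    ∃ (W : Type) (H : SimpleGraph W), H.Connected ∧
        ((∀ y z : W, y = z) ↔ b₁ = true) ∧
        ((∀ y z : W, y ≠ z → H.Adj y z) ↔ b₂ = true) ∧
        ((∃ x : W, ∀ y : W, y ≠ x → H.Adj x y) ↔ b₃ = true) ∧
        SatSentence H φ with hP
  refine ⟨fun b₁ b₂ b₃ => if P b₁ b₂ b₃ then true else false, ?_⟩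
  intro V _ G hc b₁ b₂ b₃ hb₁ hb₂ hb₃
  show SatSentence G φ ↔ (if P b₁ b₂ b₃ then true else false) = true
  constructor
  · intro hsat
    have hp : P b₁ b₂ b₃ := ⟨V, G, hc, hb₁.symm, hb₂.symm, hb₃.symm, hsat⟩
    rw [if_pos hp]
  · intro hf
    by_cases hp : P b₁ b₂ b₃
    · obtain ⟨W, H, hHc, k1, k2, k3, hsat⟩ := hp
      have h1 := hb₁.symm.trans k1.symm
      have h2 := hb₂.symm.trans k2.symm
      have h3 := hb₃.symm.trans k3.symm
      exact (GEF_sat φ hφ (ef_two hc hHc h1 h2 h3)).mpr hsat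
    · rw [if_neg hp] at hf
      exact absurd hf (by simp)
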